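/- arXiv:1512.02894 — 6 statements merged into one kernel-verified Lean document; each statement's English description precedes it below -/
import Mathlib

section
/- Let b > 0, c(x,y) = min(x, b·y), and let s ∈ ℝ satisfy μ((-∞,s)) = ν((s/b,+∞)). Suppose π is a coupling of atomless probability measures μ, ν on ℝ whose support contains a point (x₁,y₁) with x₁ < s and y₁ < s/b. Then the support of π also contains a point (x₂,y₂) with x₂ > s and y₂ > s/b, and consequently supp(π) is not c-cyclically monotone. -/
open MeasureTheory Finset

/-- The topological support of a measure on `ℝ × ℝ`: points all of whose open
neighbourhoods have positive measure. -/
def msupport (π : Measure (ℝ × ℝ)) : Set (ℝ × ℝ) :=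
  {p | ∀ U : Set (ℝ × ℝ), IsOpen U → p ∈ U → 0 < π U}

/-- `π` is a coupling of `μ` and `ν`. -/
def IsCoupling (π : Measure (ℝ × ℝ)) (μ ν : Measure ℝ) : Prop :=
  IsProbabilityMeasure π ∧ π.map Prod.fst = μ ∧ π.map Prod.snd = ν

/-- `c`-cyclical monotonicity of a set. -/
def CCyclicallyMonotone (c : ℝ → ℝ → ℝ) (S : Set (ℝ × ℝ)) : Prop :=
  ∀ (n : ℕ) (p : Fin (n + 1) → ℝ × ℝ), (∀ i, p i ∈ S) →
    ∑ i : Fin (n + 1), c (p i).1 (p i).2 ≤ ∑ i : Fin (n + 1), c (p i).1 (p (i - 1)).2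

/-- If an open set has positive measure, it meets the support. -/
lemma exists_msupport (π : Measure (ℝ × ℝ)) {U : Set (ℝ × ℝ)} (hU : IsOpen U)
    (hpos : 0 < π U) : ∃ p ∈ U, p ∈ msupport π := by
  by_contra h
  push_neg at h
  have key : ∀ p : U, ∃ V : Set (ℝ × ℝ), IsOpen V ∧ (p : ℝ × ℝ) ∈ V ∧ π V = 0 := by
    rintro ⟨p, hp⟩
    have := h p hp
    simp only [msupport, Set.mem_setOf_eq] at this
    push_neg at this
    obtain ⟨V, hVo, hpV, hV⟩ := this
    exact ⟨V, hVo, hpV, le_antisymm hV zero_le⟩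
  choose V hVo hpV hV0 using key
  obtain ⟨t, htc, ht⟩ := TopologicalSpace.isOpen_iUnion_countable V hVo
  have hsub : U ⊆ ⋃ p ∈ t, V p := by
    intro q hq
    rw [ht]
    exact Set.mem_iUnion.2 ⟨⟨q, hq⟩, hpV ⟨q, hq⟩⟩
  have : π U = 0 := by
    refine measure_mono_null hsub ?_
    exact (measure_biUnion_null_iff htc).2 fun p _ => hV0 p
  exact absurd this (ne_of_gt hpos)

lemma two_point (c : ℝ → ℝ → ℝ) (p : Fin (1+1) → ℝ × ℝ)
    (h : ∑ i : Fin (1 + 1), c (p i).1 (p i).2 ≤ ∑ i : Fin (1 + 1), c (p i).1 (p (i - 1)).2) :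
    c (p 0).1 (p 0).2 + c (p 1).1 (p 1).2 ≤ c (p 0).1 (p 1).2 + c (p 1).1 (p 0).2 := by
  simp only [Fin.sum_univ_succ, Fin.sum_univ_zero] at h
  norm_num at h
  convert h using 3
  rfl

theorem stmt3 (μ ν : Measure ℝ) [IsProbabilityMeasure μ] [IsProbabilityMeasure ν]
    [NullSingletonClass μ] [NullSingletonClass ν] (b s : ℝ) (hb : 0 < b)
    (hs : μ (Set.Iio s) = ν (Set.Ioi (s / b)))
    (π : Measure (ℝ × ℝ)) (hπ : IsCoupling π μ ν)
    (x₁ y₁ : ℝ) (hmem : (x₁, y₁) ∈ msupport π) (hx₁ : x₁ < s) (hy₁ : y₁ < s / b) :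
    (∃ x₂ y₂ : ℝ, (x₂, y₂) ∈ msupport π ∧ s < x₂ ∧ s / b < y₂) ∧
      ¬ CCyclicallyMonotone (fun x y => min x (b * y)) (msupport π) := by
  obtain ⟨hprob, hfst, hsnd⟩ := hπ
  haveI := hprob
  set A : Set (ℝ × ℝ) := Prod.fst ⁻¹' Set.Iic s with hA
  set B : Set (ℝ × ℝ) := Prod.snd ⁻¹' Set.Ioi (s / b) with hB
  have hAm : MeasurableSet A := measurable_fst measurableSet_Iic
  have hBm : MeasurableSet B := measurable_snd measurableSet_Ioi
  have hπA : π A = μ (Set.Iic s) := by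
    rw [← hfst, Measure.map_apply measurable_fst measurableSet_Iic]
  have hπB : π B = ν (Set.Ioi (s / b)) := by
    rw [← hsnd, Measure.map_apply measurable_snd measurableSet_Ioi]
  have hAB : π A = π B := by
    rw [hπA, hπB, ← hs, measure_congr (Iio_ae_eq_Iic (μ := μ) (a := s)).symm]
  have h1 : π (A ∩ B) + π (A \ B) = π A := measure_inter_add_diff A hBm
  have h2 : π (B ∩ A) + π (B \ A) = π B := measure_inter_add_diff B hAm
  have hdiff : π (A \ B) = π (B \ A) := by
    rw [Set.inter_comm] at h2
    have := h1.trans (hAB.trans h2.symm)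
    exact (ENNReal.add_right_inj (measure_ne_top π _)).1 this
  have hADB : A \ B = Set.Iic s ×ˢ Set.Iic (s / b) := by
    ext ⟨x, y⟩
    simp [hA, hB, not_lt]
  have hBDA : B \ A = Set.Ioi s ×ˢ Set.Ioi (s / b) := by
    ext ⟨x, y⟩
    simp [hA, hB, not_le, and_comm]
  have hopen : IsOpen (Set.Iio s ×ˢ Set.Iio (s / b)) := isOpen_Iio.prod isOpen_Iio
  have hpos1 : 0 < π (Set.Iio s ×ˢ Set.Iio (s / b)) :=
    hmem _ hopen ⟨hx₁, hy₁⟩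
  have hpos2 : 0 < π (Set.Ioi s ×ˢ Set.Ioi (s / b)) := by
    rw [← hBDA, ← hdiff, hADB]
    exact lt_of_lt_of_le hpos1 (measure_mono (Set.prod_mono Set.Iio_subset_Iic_self
      Set.Iio_subset_Iic_self))
  obtain ⟨⟨x₂, y₂⟩, hp2U, hp2⟩ := exists_msupport π (isOpen_Ioi.prod isOpen_Ioi) hpos2
  obtain ⟨hx₂, hy₂⟩ : s < x₂ ∧ s / b < y₂ := hp2U
  refine ⟨⟨x₂, y₂, hp2, hx₂, hy₂⟩, ?_⟩
  intro hcm
  have := hcm 1 ![(x₁, y₁), (x₂, y₂)] (by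
    intro i
    fin_cases i <;> simpa using (by assumption : _))
  have this := two_point (fun x y => min x (b*y)) ![(x₁, y₁), (x₂, y₂)] this
  simp only [Matrix.cons_val_zero, Matrix.cons_val_one, Matrix.head_cons] at this
  have hby₁ : b * y₁ < s := by
    have h := (lt_div_iff₀ hb).1 hy₁
    linarith [mul_comm y₁ b]
  have hby₂ : s < b * y₂ := by
    have h := (div_lt_iff₀ hb).1 hy₂
    linarith [mul_comm y₂ b]
  have hm1 : min x₁ (b * y₂) = x₁ := min_eq_left (by linarith)
  have hm2 : min x₂ (b * y₁) = b * y₁ := min_eq_right (by linarith)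
  rw [hm1, hm2] at this
  have hmin2 : s < min x₂ (b * y₂) := lt_min hx₂ hby₂
  rcases min_cases x₁ (b * y₁) with ⟨hme, _⟩ | ⟨hme, _⟩ <;> rw [hme] at this <;> linarith
end

section
/- Let μ, ν be atomless probability measures on ℝ, b > 0, and c(x,y) = min(x, b·y). If π ∈ Π(μ,ν) is an optimal coupling for c (i.e., it minimizes ∫ c dπ over Π(μ,ν)) and its support is c-cyclically monotone, then there exists s ∈ ℝ such that supp(π) ⊆ {x ≤ s, y ≥ s/b} ∪ {x ≥ s, y ≤ s/b}. -/
open MeasureTheory Finset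

/-- `π` is an optimal coupling of `μ` and `ν` for the cost `c`. -/
def IsOptimalCoupling (c : ℝ × ℝ → ℝ) (μ ν : Measure ℝ) (π : Measure (ℝ × ℝ)) : Prop :=
  IsCoupling π μ ν ∧ ∀ ρ : Measure (ℝ × ℝ), IsCoupling ρ μ ν → ∫ p, c p ∂π ≤ ∫ p, c p ∂ρ

theorem stmt4 (μ ν : Measure ℝ) [IsProbabilityMeasure μ] [IsProbabilityMeasure ν]
    [NullSingletonClass μ] [NullSingletonClass ν] (b : ℝ) (hb : 0 < b)
    (π : Measure (ℝ × ℝ))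
    (hopt : IsOptimalCoupling (fun p => min p.1 (b * p.2)) μ ν π)
    (hmono : CCyclicallyMonotone (fun x y => min x (b * y)) (msupport π)) :
    ∃ s : ℝ, msupport π ⊆
      {p : ℝ × ℝ | p.1 ≤ s ∧ s / b ≤ p.2} ∪ {p : ℝ × ℝ | s ≤ p.1 ∧ p.2 ≤ s / b} := by
  classical
  set S := msupport π with hS
  have key : ∀ p ∈ S, ∀ q ∈ S, min p.1 (b * p.2) ≤ max q.1 (b * q.2) := by
    intro p hp q hq
    by_contra hcon
    push_neg at hcon
    have hpair := hmono 1 ![p, q] (by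
      intro i
      fin_cases i <;> simpa using (by assumption : _))
    have hsum : min p.1 (b * p.2) + min q.1 (b * q.2) ≤
        min p.1 (b * q.2) + min q.1 (b * p.2) := by
      have h0 : (0 : Fin 2) - 1 = 1 := by decide
      have h1 : (1 : Fin 2) - 1 = 0 := by decide
      simpa [Fin.sum_univ_two, h0, h1] using hpair
    have hx : b * q.2 < p.1 := lt_of_le_of_lt (le_max_right _ _)
      (lt_of_lt_of_le hcon (min_le_left _ _))
    have hy : q.1 < b * p.2 := lt_of_le_of_lt (le_max_left _ _)
      (lt_of_lt_of_le hcon (min_le_right _ _))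
    rw [min_eq_right hx.le, min_eq_left hy.le] at hsum
    have hmm : min q.1 (b * q.2) + max q.1 (b * q.2) = q.1 + b * q.2 := min_add_max _ _
    linarith
  by_cases hSe : S.Nonempty
  · obtain ⟨q0, hq0⟩ := hSe
    set T := (fun p : ℝ × ℝ => min p.1 (b * p.2)) '' S with hT
    have hbdd : BddAbove T := ⟨max q0.1 (b * q0.2), by
      rintro _ ⟨p, hp, rfl⟩; exact key p hp q0 hq0⟩
    have hne : T.Nonempty := ⟨_, ⟨q0, hq0, rfl⟩⟩
    refine ⟨sSup T, ?_⟩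
    intro p hp
    have h1 : min p.1 (b * p.2) ≤ sSup T := le_csSup hbdd ⟨p, hp, rfl⟩
    have h2 : sSup T ≤ max p.1 (b * p.2) := csSup_le hne (by
      rintro _ ⟨q, hq, rfl⟩; exact key q hq p hp)
    rcases le_total p.1 (b * p.2) with h | h
    · left
      refine ⟨le_trans (le_of_eq (min_eq_left h).symm) h1, ?_⟩
      rw [div_le_iff₀ hb]
      calc sSup T ≤ max p.1 (b * p.2) := h2
        _ = b * p.2 := max_eq_right h
        _ = p.2 * b := mul_comm _ _
    · right
      refine ⟨le_trans h2 (le_of_eq (max_eq_left h)), ?_⟩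
      rw [le_div_iff₀ hb]
      calc p.2 * b = b * p.2 := mul_comm _ _
        _ = min p.1 (b * p.2) := (min_eq_right h).symm
        _ ≤ sSup T := h1
  · exact ⟨0, fun p hp => absurd ⟨p, hp⟩ hSe⟩
end

section
/- Let l₁,…,lₙ be affine functions lⱼ(x,y) = aⱼx + bⱼy + cⱼ and c = min(l₁,…,lₙ). For every (μ,ν)-partition 𝒫 = ({I_i},{J_i}) of order at most n, define J(𝒫) = Σᵢ minⱼ (aⱼ ∫_{I_i} x dμ + bⱼ ∫_{J_i} y dν + cⱼ μ(I_i)). Then J(𝒫) ≥ K(μ,ν), where K(μ,ν) = inf over π ∈ Π(μ,ν) of ∫ c dπ. -/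
open MeasureTheory Finset

/-- A `(μ,ν)`-partition of order `n`: partitions of the real line into `n`
disjoint nonempty connected (measurable) sets with matching positive masses. -/
structure MNPartition (μ ν : Measure ℝ) (n : ℕ) where
  I : Fin n → Set ℝ
  J : Fin n → Set ℝ
  hI_meas : ∀ i, MeasurableSet (I i)
  hJ_meas : ∀ i, MeasurableSet (J i)
  hI_conn : ∀ i, IsConnected (I i)
  hJ_conn : ∀ i, IsConnected (J i)
  hI_disj : Pairwise (Function.onFun Disjoint I)
  hJ_disj : Pairwise (Function.onFun Disjoint J)
  hI_cover : (⋃ i, I i) = Set.univ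
  hJ_cover : (⋃ i, J i) = Set.univ
  h_eq : ∀ i, μ (I i) = ν (J i)
  h_pos : ∀ i, 0 < μ (I i)

noncomputable def affFn (a b c : ℝ) : ℝ × ℝ → ℝ := fun p => a * p.1 + b * p.2 + c

noncomputable def minCost {n : ℕ} (a b c : Fin (n + 1) → ℝ) : ℝ × ℝ → ℝ :=
  fun p => Finset.univ.inf' Finset.univ_nonempty (fun j => affFn (a j) (b j) (c j) p)

/-- The partition functional `J(𝒫)`. -/
noncomputable def partFn {n k : ℕ} (a b c : Fin (n + 1) → ℝ) (μ ν : Measure ℝ)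
    (P : MNPartition μ ν (k + 1)) : ℝ :=
  ∑ i : Fin (k + 1), Finset.univ.inf' Finset.univ_nonempty
    (fun j : Fin (n + 1) =>
      a j * ∫ x in P.I i, x ∂μ + b j * ∫ y in P.J i, y ∂ν + c j * (μ (P.I i)).toReal)

/-- The optimal Kantorovich value. -/
noncomputable def KVal (c : ℝ × ℝ → ℝ) (μ ν : Measure ℝ) : ℝ :=
  sInf {r : ℝ | ∃ π : Measure (ℝ × ℝ), IsCoupling π μ ν ∧ Integrable c π ∧ r = ∫ p, c p ∂π}

section Aux

lemma myIntegrable_inf' {α ι : Type*} [MeasurableSpace α] {μ : Measure α}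
    (s : Finset ι) (hs : s.Nonempty) (f : ι → α → ℝ)
    (hf : ∀ i ∈ s, Integrable (f i) μ) :
    Integrable (fun x => s.inf' hs (fun i => f i x)) μ := by
  revert hs hf
  induction s using Finset.cons_induction with
  | empty => intro hs _; exact absurd hs (by simp)
  | cons i t hi ih =>
    intro hs hf
    rcases t.eq_empty_or_nonempty with rfl | ht
    · have h := hf i (by simp)
      apply h.congr
      filter_upwards with x
      refine le_antisymm (Finset.le_inf' _ _ ?_) (Finset.inf'_le _ (by simp))
      intro j hj
      rcases Finset.mem_cons.mp hj with rfl | h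
      · exact le_rfl
      · exact absurd h (by simp)
    · have h1 := hf i (by simp)
      have h2 := ih ht (fun j hj => hf j (Finset.mem_cons_of_mem hj))
      have := h1.inf h2
      apply this.congr
      filter_upwards with x
      rw [Finset.inf'_cons]
      rfl

lemma myMap_finset_sum {ι : Type*} (s : Finset ι) (m : ι → Measure (ℝ × ℝ))
    {e : ℝ × ℝ → ℝ} (he : Measurable e) :
    (∑ i ∈ s, m i).map e = ∑ i ∈ s, (m i).map e := by
  induction s using Finset.cons_induction with
  | empty => simp
  | cons i t hi ih => rw [Finset.sum_cons, Finset.sum_cons, Measure.map_add _ _ he, ih]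

lemma myIntegrable_comp_proj {π : Measure (ℝ × ℝ)} {m : Measure ℝ} {e : ℝ × ℝ → ℝ}
    (he : Measurable e) (h : π.map e = m) {f : ℝ → ℝ} (hfm : StronglyMeasurable f)
    (hi : Integrable f m) : Integrable (fun p => f (e p)) π := by
  subst h
  exact (integrable_map_measure hfm.aestronglyMeasurable he.aemeasurable).mp hi

lemma myIntegral_comp_proj {π : Measure (ℝ × ℝ)} {m : Measure ℝ} {e : ℝ × ℝ → ℝ}
    (he : Measurable e) (h : π.map e = m) {f : ℝ → ℝ} (hfm : StronglyMeasurable f) :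
    ∫ p, f (e p) ∂π = ∫ x, f x ∂m := by
  subst h
  exact (integral_map he.aemeasurable hfm.aestronglyMeasurable).symm

end Aux

theorem stmt8 (n k : ℕ) (hk : k ≤ n) (a b c : Fin (n + 1) → ℝ)
    (μ ν : Measure ℝ) [IsProbabilityMeasure μ] [IsProbabilityMeasure ν]
    [NullSingletonClass μ] [NullSingletonClass ν]
    (hμ : Integrable (fun x : ℝ => x) μ) (hν : Integrable (fun y : ℝ => y) ν)
    (P : MNPartition μ ν (k + 1)) :
    KVal (minCost a b c) μ ν ≤ partFn a b c μ ν P := by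
  classical
  set πi : Fin (k + 1) → Measure (ℝ × ℝ) := fun i =>
    (ν (P.J i))⁻¹ • ((μ.restrict (P.I i)).prod (ν.restrict (P.J i))) with hπidef
  set π : Measure (ℝ × ℝ) := ∑ i, πi i with hπdef
  have hJ0 : ∀ i, ν (P.J i) ≠ 0 := fun i => by rw [← P.h_eq i]; exact (P.h_pos i).ne'
  have hJt : ∀ i, ν (P.J i) ≠ ⊤ := fun i => measure_ne_top ν _
  have hfsti : ∀ i, (πi i).map Prod.fst = μ.restrict (P.I i) := by
    intro i
    rw [hπidef]
    simp only
    rw [Measure.map_smul, Measure.map_fst_prod, Measure.restrict_apply_univ, smul_smul,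
      ENNReal.inv_mul_cancel (hJ0 i) (hJt i), one_smul]
  have hsndi : ∀ i, (πi i).map Prod.snd = ν.restrict (P.J i) := by
    intro i
    rw [hπidef]
    simp only
    rw [Measure.map_smul, Measure.map_snd_prod, Measure.restrict_apply_univ, P.h_eq i, smul_smul,
      ENNReal.inv_mul_cancel (hJ0 i) (hJt i), one_smul]
  have hfst : π.map Prod.fst = μ := by
    rw [hπdef, myMap_finset_sum _ _ measurable_fst,
      Finset.sum_congr rfl (fun i _ => hfsti i), ← Measure.sum_fintype,
      ← Measure.restrict_iUnion P.hI_disj P.hI_meas, P.hI_cover, Measure.restrict_univ]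
  have hsnd : π.map Prod.snd = ν := by
    rw [hπdef, myMap_finset_sum _ _ measurable_snd,
      Finset.sum_congr rfl (fun i _ => hsndi i), ← Measure.sum_fintype,
      ← Measure.restrict_iUnion P.hJ_disj P.hJ_meas, P.hJ_cover, Measure.restrict_univ]
  have hπuniv : π Set.univ = 1 := by
    have h1 : (π.map Prod.fst) Set.univ = π Set.univ := by
      rw [Measure.map_apply measurable_fst MeasurableSet.univ, Set.preimage_univ]
    rw [hfst] at h1
    rw [← h1, measure_univ]
  have hπprob : IsProbabilityMeasure π := ⟨hπuniv⟩
  have hπiuniv : ∀ i, πi i Set.univ = μ (P.I i) := by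
    intro i
    have h := congrArg (fun m : Measure ℝ => m Set.univ) (hfsti i)
    rwa [Measure.map_apply measurable_fst MeasurableSet.univ, Set.preimage_univ,
      Measure.restrict_apply_univ] at h
  have hle : ∀ i, πi i ≤ π := by
    intro i
    rw [hπdef]
    refine Measure.le_iff.mpr (fun s hs => ?_)
    rw [Measure.finset_sum_apply]
    exact Finset.single_le_sum (f := fun j => πi j s) (fun j _ => zero_le) (Finset.mem_univ i)
  have h1 : Integrable (fun p : ℝ × ℝ => p.1) π :=
    myIntegrable_comp_proj measurable_fst hfst stronglyMeasurable_id hμ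
  have h2 : Integrable (fun p : ℝ × ℝ => p.2) π :=
    myIntegrable_comp_proj measurable_snd hsnd stronglyMeasurable_id hν
  have haffπ : ∀ j, Integrable (affFn (a j) (b j) (c j)) π := by
    intro j
    unfold affFn
    exact ((h1.const_mul (a j)).add (h2.const_mul (b j))).add (integrable_const (c j))
  have hmin : Integrable (minCost a b c) π := by
    unfold minCost
    exact myIntegrable_inf' _ _ _ (fun j _ => haffπ j)
  have key : ∀ i j, ∫ p, affFn (a j) (b j) (c j) p ∂(πi i)
      = a j * ∫ x in P.I i, x ∂μ + b j * ∫ y in P.J i, y ∂ν + c j * (μ (P.I i)).toReal := by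
    intro i j
    have h1i : Integrable (fun p : ℝ × ℝ => p.1) (πi i) := h1.mono_measure (hle i)
    have h2i : Integrable (fun p : ℝ × ℝ => p.2) (πi i) := h2.mono_measure (hle i)
    have e1 : ∫ p : ℝ × ℝ, p.1 ∂(πi i) = ∫ x in P.I i, x ∂μ :=
      myIntegral_comp_proj measurable_fst (hfsti i) stronglyMeasurable_id
    have e2 : ∫ p : ℝ × ℝ, p.2 ∂(πi i) = ∫ y in P.J i, y ∂ν :=
      myIntegral_comp_proj measurable_snd (hsndi i) stronglyMeasurable_id
    haveI : IsFiniteMeasure (πi i) := ⟨by rw [hπiuniv i]; exact (measure_ne_top μ _).lt_top⟩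
    have hA : Integrable (fun p : ℝ × ℝ => a j * p.1 + b j * p.2) (πi i) :=
      (h1i.const_mul _).add (h2i.const_mul _)
    unfold affFn
    rw [integral_add hA (integrable_const _),
      integral_add (h1i.const_mul _) (h2i.const_mul _), integral_const_mul, integral_const_mul,
      integral_const, e1, e2, measureReal_def, hπiuniv i, smul_eq_mul]
    ring
  have hstep : ∀ i, ∫ p, minCost a b c p ∂(πi i) ≤
      Finset.univ.inf' Finset.univ_nonempty (fun j : Fin (n + 1) =>
        a j * ∫ x in P.I i, x ∂μ + b j * ∫ y in P.J i, y ∂ν + c j * (μ (P.I i)).toReal) := by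
    intro i
    apply Finset.le_inf'
    intro j _
    rw [← key i j]
    refine integral_mono (hmin.mono_measure (hle i)) ((haffπ j).mono_measure (hle i)) ?_
    intro p
    exact Finset.inf'_le _ (Finset.mem_univ j)
  have hsum : ∫ p, minCost a b c p ∂π = ∑ i, ∫ p, minCost a b c p ∂(πi i) := by
    rw [hπdef]
    exact integral_finset_sum_measure (fun i _ => hmin.mono_measure (hle i))
  have hJle : ∫ p, minCost a b c p ∂π ≤ partFn a b c μ ν P := by
    rw [hsum]
    unfold partFn
    exact Finset.sum_le_sum (fun i _ => hstep i)
  have hmem : (∫ p, minCost a b c p ∂π) ∈ {r : ℝ | ∃ π' : Measure (ℝ × ℝ),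
      IsCoupling π' μ ν ∧ Integrable (minCost a b c) π' ∧ r = ∫ p, minCost a b c p ∂π'} :=
    ⟨π, ⟨hπprob, hfst, hsnd⟩, hmin, rfl⟩
  have hbdd : BddBelow {r : ℝ | ∃ π' : Measure (ℝ × ℝ),
      IsCoupling π' μ ν ∧ Integrable (minCost a b c) π' ∧ r = ∫ p, minCost a b c p ∂π'} := by
    set M : ℝ := ∑ j : Fin (n + 1), (|a j| * ∫ x, |x| ∂μ + |b j| * ∫ y, |y| ∂ν + |c j|) with hM
    refine ⟨-M, ?_⟩
    rintro r ⟨π', ⟨hp', hf', hs'⟩, hint', rfl⟩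
    haveI := hp'
    have habs1 : Integrable (fun p : ℝ × ℝ => |p.1|) π' :=
      myIntegrable_comp_proj measurable_fst hf' continuous_abs.stronglyMeasurable hμ.abs
    have habs2 : Integrable (fun p : ℝ × ℝ => |p.2|) π' :=
      myIntegrable_comp_proj measurable_snd hs' continuous_abs.stronglyMeasurable hν.abs
    set g : ℝ × ℝ → ℝ := fun p => ∑ j : Fin (n + 1), (|a j| * |p.1| + |b j| * |p.2| + |c j|)
      with hgdef
    have htermint : ∀ j : Fin (n + 1),
        Integrable (fun p : ℝ × ℝ => |a j| * |p.1| + |b j| * |p.2| + |c j|) π' := fun j =>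
      ((habs1.const_mul _).add (habs2.const_mul _)).add (integrable_const _)
    have hgint : Integrable g π' := by
      rw [hgdef]
      exact integrable_finset_sum _ (fun j _ => htermint j)
    have hptwise : ∀ p, -g p ≤ minCost a b c p := by
      intro p
      obtain ⟨j, -, hj⟩ := Finset.exists_mem_eq_inf' (H := Finset.univ_nonempty)
        (fun j => affFn (a j) (b j) (c j) p)
      have hmc : minCost a b c p = affFn (a j) (b j) (c j) p := hj
      rw [hmc]
      have hterm : |a j| * |p.1| + |b j| * |p.2| + |c j| ≤ g p := by
        rw [hgdef]
        exact Finset.single_le_sum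
          (f := fun j : Fin (n + 1) => |a j| * |p.1| + |b j| * |p.2| + |c j|)
          (fun j _ => by positivity) (Finset.mem_univ j)
      have h1' := neg_abs_le (a j * p.1)
      have h2' := neg_abs_le (b j * p.2)
      have h3' := neg_abs_le (c j)
      rw [abs_mul] at h1' h2'
      show -g p ≤ a j * p.1 + b j * p.2 + c j
      linarith
    have hgeq : ∫ p, g p ∂π' = M := by
      rw [hgdef, hM, integral_finset_sum _ (fun j _ => htermint j)]
      refine Finset.sum_congr rfl (fun j _ => ?_)
      have hA : Integrable (fun p : ℝ × ℝ => |a j| * |p.1| + |b j| * |p.2|) π' :=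
        (habs1.const_mul _).add (habs2.const_mul _)
      rw [integral_add hA (integrable_const _),
        integral_add (habs1.const_mul _) (habs2.const_mul _), integral_const_mul,
        integral_const_mul, integral_const, probReal_univ, one_smul,
        myIntegral_comp_proj measurable_fst hf' continuous_abs.stronglyMeasurable,
        myIntegral_comp_proj measurable_snd hs' continuous_abs.stronglyMeasurable]
    have : ∫ p, -g p ∂π' ≤ ∫ p, minCost a b c p ∂π' :=
      integral_mono hgint.neg hint' hptwise
    refine le_trans (le_of_eq ?_) this
    rw [integral_neg, hgeq]
  unfold KVal
  exact le_trans (csInf_le hbdd hmem) hJle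
end

section
/- Let π be an optimal coupling for cost c = min(l₁,…,lₙ) (lᵢ affine, pairwise satisfying the non-degeneracy assumption, each set {c = lᵢ} having non-empty interior), and let ({I_i},{J_i}) be a (μ,ν)-partition such that π is concentrated on ⋃ᵢ I_i × J_i and c = lᵢ on I_i × J_i whenever π(I_i × J_i) > 0. Then J(𝒫) = ∫ c dπ = K(μ,ν), i.e., the partition functional attains the Kantorovich minimum. -/
open MeasureTheory Finset

/-- Non-degeneracy assumption (A) for a pair of affine functions:
they are distinct and the line where they coincide is not parallel to an axis. -/
def AssumptionA (a₁ b₁ c₁ a₂ b₂ c₂ : ℝ) : Prop :=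
  a₁ ≠ a₂ ∧ b₁ ≠ b₂

theorem stmt9 (n k : ℕ) (a b c : Fin (n + 1) → ℝ)
    (hA : ∀ i j : Fin (n + 1), i ≠ j → AssumptionA (a i) (b i) (c i) (a j) (b j) (c j))
    (hint : ∀ j : Fin (n + 1),
      (interior {p : ℝ × ℝ | minCost a b c p = affFn (a j) (b j) (c j) p}).Nonempty)
    (μ ν : Measure ℝ) [IsProbabilityMeasure μ] [IsProbabilityMeasure ν]
    [NullSingletonClass μ] [NullSingletonClass ν]
    (hμ : Integrable (fun x : ℝ => x) μ) (hν : Integrable (fun y : ℝ => y) ν)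
    (π : Measure (ℝ × ℝ)) (hπ : IsCoupling π μ ν)
    (hci : Integrable (minCost a b c) π)
    (hopt : ∀ ρ : Measure (ℝ × ℝ), IsCoupling ρ μ ν → Integrable (minCost a b c) ρ →
      ∫ p, minCost a b c p ∂π ≤ ∫ p, minCost a b c p ∂ρ)
    (P : MNPartition μ ν (k + 1))
    (hconc : π (⋃ i, P.I i ×ˢ P.J i) = 1)
    (hcl : ∀ i : Fin (k + 1), 0 < π (P.I i ×ˢ P.J i) →
      ∃ j : Fin (n + 1), ∀ p ∈ P.I i ×ˢ P.J i, minCost a b c p = affFn (a j) (b j) (c j) p) :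
    partFn a b c μ ν P = ∫ p, minCost a b c p ∂π ∧
      ∫ p, minCost a b c p ∂π = KVal (minCost a b c) μ ν := by

  obtain ⟨hπp, hπ1, hπ2⟩ := hπ
  haveI : IsProbabilityMeasure π := hπp
  set U : Set (ℝ × ℝ) := ⋃ i, P.I i ×ˢ P.J i with hU_def
  have hrm : ∀ i, MeasurableSet (P.I i ×ˢ P.J i) :=
    fun i => (P.hI_meas i).prod (P.hJ_meas i)
  have hU_meas : MeasurableSet U := MeasurableSet.iUnion hrm
  have hUc : π Uᶜ = 0 := by
    rw [measure_compl hU_meas (measure_ne_top π U), hconc, measure_univ, tsub_self]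
  -- marginal integrability
  have hx : Integrable (fun p : ℝ × ℝ => p.1) π := by
    rw [← hπ1] at hμ
    exact (integrable_map_measure hμ.aestronglyMeasurable measurable_fst.aemeasurable).mp hμ
  have hy : Integrable (fun p : ℝ × ℝ => p.2) π := by
    rw [← hπ2] at hν
    exact (integrable_map_measure hν.aestronglyMeasurable measurable_snd.aemeasurable).mp hν
  -- intersection identities
  have hIU : ∀ i, (P.I i ×ˢ (Set.univ : Set ℝ)) ∩ U = P.I i ×ˢ P.J i := by
    intro i
    ext p
    simp only [Set.mem_inter_iff, Set.mem_prod, Set.mem_univ, and_true, hU_def,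
      Set.mem_iUnion]
    constructor
    · rintro ⟨h1, i', h1', h2'⟩
      rcases eq_or_ne i' i with rfl | hne
      · exact ⟨h1, h2'⟩
      · exact absurd h1 (fun h => Set.disjoint_left.mp (P.hI_disj hne) h1' h)
    · rintro ⟨h1, h2⟩
      exact ⟨h1, i, h1, h2⟩
  have hJU : ∀ i, ((Set.univ : Set ℝ) ×ˢ P.J i) ∩ U = P.I i ×ˢ P.J i := by
    intro i
    ext p
    simp only [Set.mem_inter_iff, Set.mem_prod, Set.mem_univ, true_and, hU_def,
      Set.mem_iUnion]
    constructor
    · rintro ⟨h2, i', h1', h2'⟩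
      rcases eq_or_ne i' i with rfl | hne
      · exact ⟨h1', h2⟩
      · exact absurd h2 (fun h => Set.disjoint_left.mp (P.hJ_disj hne) h2' h)
    · rintro ⟨h1, h2⟩
      exact ⟨h2, i, h1, h2⟩
  -- restriction equalities
  have hres : ∀ i (S : Set (ℝ × ℝ)), P.I i ×ˢ P.J i ⊆ S → S ∩ U = P.I i ×ˢ P.J i →
      π.restrict S = π.restrict (P.I i ×ˢ P.J i) := by
    intro i S hsub hS
    refine (Measure.restrict_congr_set ?_).symm
    rw [MeasureTheory.ae_eq_set]
    constructor
    · rw [Set.diff_eq_empty.mpr hsub]; exact measure_empty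
    · refine measure_mono_null ?_ hUc
      intro p hp
      rcases hp with ⟨hpS, hpn⟩
      intro hpU
      exact hpn (hS ▸ ⟨hpS, hpU⟩)
  have hresI : ∀ i, π.restrict (P.I i ×ˢ (Set.univ : Set ℝ)) =
      π.restrict (P.I i ×ˢ P.J i) :=
    fun i => hres i _ (Set.prod_mono_right (Set.subset_univ _)) (hIU i)
  have hresJ : ∀ i, π.restrict ((Set.univ : Set ℝ) ×ˢ P.J i) =
      π.restrict (P.I i ×ˢ P.J i) :=
    fun i => hres i _ (Set.prod_mono_left (Set.subset_univ _)) (hJU i)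
  -- measure of each rectangle
  have hmeasI : ∀ i, π (P.I i ×ˢ P.J i) = μ (P.I i) := by
    intro i
    have h1 : (π.map Prod.fst) (P.I i) = π (Prod.fst ⁻¹' P.I i) :=
      Measure.map_apply measurable_fst (P.hI_meas i)
    rw [hπ1] at h1
    have hpre : Prod.fst ⁻¹' P.I i = P.I i ×ˢ (Set.univ : Set ℝ) :=
      (Set.prod_univ).symm
    have h2 : π (P.I i ×ˢ (Set.univ : Set ℝ)) = π (P.I i ×ˢ P.J i) := by
      have := congrArg (fun m : Measure (ℝ × ℝ) => m Set.univ) (hresI i)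
      simpa [Measure.restrict_apply_univ] using this
    rw [h1, hpre, h2]
  -- x integral over a rectangle
  have hxint : ∀ i, ∫ p in P.I i ×ˢ P.J i, p.1 ∂π = ∫ x in P.I i, x ∂μ := by
    intro i
    have h1 : ∫ x in P.I i, x ∂(π.map Prod.fst) =
        ∫ p in Prod.fst ⁻¹' P.I i, p.1 ∂π :=
      setIntegral_map (P.hI_meas i)
        (by rw [hπ1]; exact hμ.aestronglyMeasurable) measurable_fst.aemeasurable
    rw [hπ1] at h1
    rw [h1, show Prod.fst ⁻¹' P.I i = P.I i ×ˢ (Set.univ : Set ℝ) from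
      (Set.prod_univ).symm]
    exact congrArg (fun m : Measure (ℝ × ℝ) => ∫ p, (p : ℝ × ℝ).1 ∂m) (hresI i).symm
  have hyint : ∀ i, ∫ p in P.I i ×ˢ P.J i, p.2 ∂π = ∫ y in P.J i, y ∂ν := by
    intro i
    have h1 : ∫ y in P.J i, y ∂(π.map Prod.snd) =
        ∫ p in Prod.snd ⁻¹' P.J i, p.2 ∂π :=
      setIntegral_map (P.hJ_meas i)
        (by rw [hπ2]; exact hν.aestronglyMeasurable) measurable_snd.aemeasurable
    rw [hπ2] at h1
    rw [h1, show Prod.snd ⁻¹' P.J i = (Set.univ : Set ℝ) ×ˢ P.J i from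
      (Set.univ_prod).symm]
    exact congrArg (fun m : Measure (ℝ × ℝ) => ∫ p, (p : ℝ × ℝ).2 ∂m) (hresJ i).symm
  -- value of ∫ affFn over a rectangle
  have haff_int : ∀ (j : Fin (n + 1)) (s : Set (ℝ × ℝ)),
      Integrable (affFn (a j) (b j) (c j)) (π.restrict s) := by
    intro j s
    exact (((hx.restrict).const_mul (a j)).add ((hy.restrict).const_mul (b j))).add
      (integrable_const _)
  have haff : ∀ i (j : Fin (n + 1)),
      ∫ p in P.I i ×ˢ P.J i, affFn (a j) (b j) (c j) p ∂π =
        a j * ∫ x in P.I i, x ∂μ + b j * ∫ y in P.J i, y ∂ν +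
          c j * (μ (P.I i)).toReal := by
    intro i j
    set m := π.restrict (P.I i ×ˢ P.J i) with hm
    have e1 : ∫ p, affFn (a j) (b j) (c j) p ∂m =
        (∫ p : ℝ × ℝ, (a j * p.1 + b j * p.2) ∂m) + ∫ _ : ℝ × ℝ, c j ∂m :=
      integral_add (((hx.restrict).const_mul (a j)).add ((hy.restrict).const_mul (b j)))
        (integrable_const _)
    have e2 : ∫ p : ℝ × ℝ, (a j * p.1 + b j * p.2) ∂m =
        (∫ p : ℝ × ℝ, a j * p.1 ∂m) + ∫ p : ℝ × ℝ, b j * p.2 ∂m :=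
      integral_add ((hx.restrict).const_mul (a j)) ((hy.restrict).const_mul (b j))
    have e3 : ∫ p : ℝ × ℝ, a j * p.1 ∂m = a j * ∫ p : ℝ × ℝ, p.1 ∂m :=
      integral_const_mul _ _
    have e4 : ∫ p : ℝ × ℝ, b j * p.2 ∂m = b j * ∫ p : ℝ × ℝ, p.2 ∂m :=
      integral_const_mul _ _
    have e5 : ∫ _ : ℝ × ℝ, c j ∂m = c j * (μ (P.I i)).toReal := by
      rw [hm, integral_const, measureReal_def, Measure.restrict_apply_univ, hmeasI i, smul_eq_mul,
        mul_comm]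
    rw [e1, e2, e3, e4, e5, show (∫ p : ℝ × ℝ, p.1 ∂m) = ∫ x in P.I i, x ∂μ from
      hxint i, show (∫ p : ℝ × ℝ, p.2 ∂m) = ∫ y in P.J i, y ∂ν from hyint i]
  -- each rectangle has positive measure
  have hpos : ∀ i, 0 < π (P.I i ×ˢ P.J i) := fun i => (hmeasI i) ▸ P.h_pos i
  -- minCost ≤ affFn pointwise
  have hmle : ∀ (j : Fin (n + 1)) (p : ℝ × ℝ),
      minCost a b c p ≤ affFn (a j) (b j) (c j) p := fun j p =>
    Finset.inf'_le _ (Finset.mem_univ j)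
  -- per-rectangle identity with the inf'
  have hkey : ∀ i, ∫ p in P.I i ×ˢ P.J i, minCost a b c p ∂π =
      Finset.univ.inf' Finset.univ_nonempty
        (fun j : Fin (n + 1) =>
          a j * ∫ x in P.I i, x ∂μ + b j * ∫ y in P.J i, y ∂ν +
            c j * (μ (P.I i)).toReal) := by
    intro i
    obtain ⟨j, hj⟩ := hcl i (hpos i)
    have hint_eq : ∫ p in P.I i ×ˢ P.J i, minCost a b c p ∂π =
        ∫ p in P.I i ×ˢ P.J i, affFn (a j) (b j) (c j) p ∂π :=
      setIntegral_congr_fun (hrm i) (fun p hp => hj p hp)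
    rw [hint_eq, haff i j]
    refine le_antisymm ?_ (Finset.inf'_le _ (Finset.mem_univ j))
    refine Finset.le_inf' _ _ (fun j' _ => ?_)
    rw [← haff i j, ← haff i j', ← hint_eq]
    refine setIntegral_mono_on hci.integrableOn (haff_int j' _) (hrm i) ?_
    exact fun p _ => hmle j' p
  -- decompose the full integral
  have hdisj : Pairwise (Function.onFun Disjoint fun i => P.I i ×ˢ P.J i) := by
    intro i i' hne
    rw [Function.onFun, Set.disjoint_left]
    rintro p ⟨h1, _⟩ ⟨h2, _⟩
    exact Set.disjoint_left.mp (P.hI_disj hne) h1 h2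
  have hrestU : π.restrict U = π := by
    refine Measure.restrict_eq_self_of_ae_mem ?_
    rw [Filter.eventually_iff, mem_ae_iff]
    simpa using hUc
  have hsplit : ∫ p, minCost a b c p ∂π =
      ∑ i : Fin (k + 1), ∫ p in P.I i ×ˢ P.J i, minCost a b c p ∂π := by
    rw [← hrestU]
    have := integral_iUnion (μ := π) hrm hdisj hci.integrableOn
      (f := minCost a b c)
    rw [← hU_def] at this
    rw [show (∫ p, minCost a b c p ∂π.restrict U) = ∫ p in U, minCost a b c p ∂π from rfl,
      this, tsum_fintype]
    congr 1
    ext i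
    rw [hrestU]
  have h1 : partFn a b c μ ν P = ∫ p, minCost a b c p ∂π := by
    rw [hsplit, partFn]
    exact Finset.sum_congr rfl (fun i _ => (hkey i).symm)
  refine ⟨h1, ?_⟩
  -- Kantorovich value
  have hmem : (∫ p, minCost a b c p ∂π) ∈
      {r : ℝ | ∃ ρ : Measure (ℝ × ℝ), IsCoupling ρ μ ν ∧ Integrable (minCost a b c) ρ ∧
        r = ∫ p, minCost a b c p ∂ρ} := ⟨π, ⟨hπp, hπ1, hπ2⟩, hci, rfl⟩
  have hlb : ∀ r ∈ {r : ℝ | ∃ ρ : Measure (ℝ × ℝ), IsCoupling ρ μ ν ∧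
      Integrable (minCost a b c) ρ ∧ r = ∫ p, minCost a b c p ∂ρ},
      (∫ p, minCost a b c p ∂π) ≤ r := by
    rintro r ⟨ρ, hρ, hρi, rfl⟩
    exact hopt ρ hρ hρi
  exact le_antisymm (le_csInf ⟨_, hmem⟩ hlb) (csInf_le ⟨_, hlb⟩ hmem)
end

section
/- Let μ₁, μ₂ be atomless probability measures on ℝ with finite first moments and s ∈ ℝ with μ₁((-∞,s]) + μ₂((-∞,s]) = 1. If π ∈ Π(μ₁,μ₂) is a coupling whose support is contained in {(x,y) : x ≤ s, y ≥ s} ∪ {(x,y) : x ≥ s, y ≤ s}, then ∫ min(x,y) dπ = ∫_{(-∞,s]} x dμ₁ + ∫_{(-∞,s]} y dμ₂; in particular this value does not depend on the choice of such π. -/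
open MeasureTheory

lemma msupport_compl_null (π : Measure (ℝ × ℝ)) : π (msupport π)ᶜ = 0 := by
  apply measure_null_of_locally_null
  intro x hx
  simp only [msupport, Set.mem_compl_iff, Set.mem_setOf_eq, not_forall] at hx
  obtain ⟨U, hU, hxU, hpos⟩ := hx
  exact ⟨U, nhdsWithin_le_nhds (hU.mem_nhds hxU), le_antisymm (not_lt.1 hpos) bot_le⟩

theorem stmt13 (μ₁ μ₂ : Measure ℝ) [IsProbabilityMeasure μ₁] [IsProbabilityMeasure μ₂]
    [NullSingletonClass μ₁] [NullSingletonClass μ₂]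
    (h₁ : Integrable (fun x : ℝ => x) μ₁) (h₂ : Integrable (fun x : ℝ => x) μ₂)
    (s : ℝ) (hs : (μ₁ (Set.Iic s)).toReal + (μ₂ (Set.Iic s)).toReal = 1)
    (π : Measure (ℝ × ℝ)) (hπ : IsCoupling π μ₁ μ₂)
    (hsupp : msupport π ⊆
      {p : ℝ × ℝ | p.1 ≤ s ∧ s ≤ p.2} ∪ {p : ℝ × ℝ | s ≤ p.1 ∧ p.2 ≤ s}) :
    ∫ p : ℝ × ℝ, min p.1 p.2 ∂π =
      (∫ x in Set.Iic s, x ∂μ₁) + ∫ y in Set.Iic s, y ∂μ₂ := by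
  obtain ⟨hprob, hfst, hsnd⟩ := hπ
  set I : ℝ → ℝ := (Set.Iic s).indicator (fun x => x) with hI
  -- a.e. membership in the union
  have hC : ∀ᵐ p ∂π, p ∈ ({p : ℝ × ℝ | p.1 ≤ s ∧ s ≤ p.2} ∪ {p : ℝ × ℝ | s ≤ p.1 ∧ p.2 ≤ s}) := by
    rw [ae_iff]
    exact measure_mono_null (fun p hp => fun h => hp (hsupp h)) (msupport_compl_null π)
  have hx : ∀ᵐ p : ℝ × ℝ ∂π, p.1 ≠ s := by
    rw [ae_iff]
    have : {p : ℝ × ℝ | ¬ p.1 ≠ s} = Prod.fst ⁻¹' {s} := by ext p; simp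
    rw [this, ← Measure.map_apply measurable_fst (measurableSet_singleton s), hfst]
    exact measure_singleton s
  have hy : ∀ᵐ p : ℝ × ℝ ∂π, p.2 ≠ s := by
    rw [ae_iff]
    have : {p : ℝ × ℝ | ¬ p.2 ≠ s} = Prod.snd ⁻¹' {s} := by ext p; simp
    rw [this, ← Measure.map_apply measurable_snd (measurableSet_singleton s), hsnd]
    exact measure_singleton s
  have hae : ∀ᵐ p : ℝ × ℝ ∂π, min p.1 p.2 = I p.1 + I p.2 := by
    filter_upwards [hC, hx, hy] with p hp hpx hpy
    rcases hp with ⟨h1, h2⟩ | ⟨h1, h2⟩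
    · have h2' : ¬ p.2 ≤ s := fun h => hpy (le_antisymm h h2)
      simp [hI, Set.indicator, h1, h2', min_eq_left (h1.trans h2)]
    · have h1' : ¬ p.1 ≤ s := fun h => hpx (le_antisymm h h1)
      simp [hI, Set.indicator, h1', h2, min_eq_right (h2.trans h1)]
  have hIsm : StronglyMeasurable I := (stronglyMeasurable_id).indicator measurableSet_Iic
  have hint1 : Integrable (fun p : ℝ × ℝ => I p.1) π := by
    have : Integrable I μ₁ := h₁.indicator measurableSet_Iic
    rw [← hfst] at this
    exact this.comp_measurable measurable_fst
  have hint2 : Integrable (fun p : ℝ × ℝ => I p.2) π := by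
    have : Integrable I μ₂ := h₂.indicator measurableSet_Iic
    rw [← hsnd] at this
    exact this.comp_measurable measurable_snd
  rw [integral_congr_ae hae, integral_add hint1 hint2]
  have e1 : ∫ p : ℝ × ℝ, I p.1 ∂π = ∫ x, I x ∂μ₁ := by
    rw [← hfst, integral_map measurable_fst.aemeasurable hIsm.aestronglyMeasurable]
  have e2 : ∫ p : ℝ × ℝ, I p.2 ∂π = ∫ y, I y ∂μ₂ := by
    rw [← hsnd, integral_map measurable_snd.aemeasurable hIsm.aestronglyMeasurable]
  rw [e1, e2, hI, integral_indicator measurableSet_Iic, integral_indicator measurableSet_Iic]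
end

section
/- Let b > 0 and c(x,y) = min(x, b·y). Suppose μ, ν are atomless probability measures on ℝ with compact support, and let s satisfy μ((-∞,s)) = ν((s/b,+∞)). Then any coupling π ∈ Π(μ,ν) supported in Q = {x ≤ s, y ≥ s/b} ∪ {x ≥ s, y ≤ s/b} is optimal for c, and ∫ c dπ = ∫_{(-∞,s]} x dμ + b ∫_{(-∞,s/b]} y dν. -/
open MeasureTheory

lemma abs_min_le_add (a c : ℝ) : |min a c| ≤ |a| + |c| := by
  rcases min_cases a c with ⟨h, _⟩ | ⟨h, _⟩ <;> rw [h]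
  · linarith [abs_nonneg c]
  · linarith [abs_nonneg a]

theorem stmt16 (μ ν : Measure ℝ) [IsProbabilityMeasure μ] [IsProbabilityMeasure ν]
    [NullSingletonClass μ] [NullSingletonClass ν]
    (hμc : ∃ K : Set ℝ, IsCompact K ∧ μ Kᶜ = 0)
    (hνc : ∃ K : Set ℝ, IsCompact K ∧ ν Kᶜ = 0)
    (b : ℝ) (hb : 0 < b)
    (s : ℝ) (hs : μ (Set.Iio s) = ν (Set.Ioi (s / b)))
    (π : Measure (ℝ × ℝ)) (hπ : IsCoupling π μ ν)
    (hsupp : msupport π ⊆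
      {p : ℝ × ℝ | p.1 ≤ s ∧ s / b ≤ p.2} ∪ {p : ℝ × ℝ | s ≤ p.1 ∧ p.2 ≤ s / b}) :
    (∀ ρ : Measure (ℝ × ℝ), IsCoupling ρ μ ν →
        ∫ p : ℝ × ℝ, min p.1 (b * p.2) ∂π ≤ ∫ p : ℝ × ℝ, min p.1 (b * p.2) ∂ρ) ∧
      ∫ p : ℝ × ℝ, min p.1 (b * p.2) ∂π =
        (∫ x in Set.Iic s, x ∂μ) + b * ∫ y in Set.Iic (s / b), y ∂ν := by
  classical
  obtain ⟨K, hK, hKμ⟩ := hμc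
  obtain ⟨K', hK', hKν⟩ := hνc
  obtain ⟨C, hC⟩ := hK.isBounded.exists_norm_le
  obtain ⟨C', hC'⟩ := hK'.isBounded.exists_norm_le
  -- a.e. bounds on couplings
  have hbound : ∀ ρ : Measure (ℝ × ℝ), IsCoupling ρ μ ν →
      ∀ᵐ p ∂ρ, |p.1| ≤ C ∧ |p.2| ≤ C' := by
    intro ρ hρ
    have h1 : ρ (Prod.fst ⁻¹' Kᶜ) = 0 := by
      rw [← Measure.map_apply measurable_fst hK.isClosed.measurableSet.compl, hρ.2.1]
      exact hKμ
    have h2 : ρ (Prod.snd ⁻¹' K'ᶜ) = 0 := by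
      rw [← Measure.map_apply measurable_snd hK'.isClosed.measurableSet.compl, hρ.2.2]
      exact hKν
    have e1 : ∀ᵐ p ∂ρ, p.1 ∈ K := by
      rw [ae_iff]
      exact h1
    have e2 : ∀ᵐ p ∂ρ, p.2 ∈ K' := by
      rw [ae_iff]
      exact h2
    filter_upwards [e1, e2] with p hp1 hp2
    exact ⟨by simpa [Real.norm_eq_abs] using hC _ hp1,
      by simpa [Real.norm_eq_abs] using hC' _ hp2⟩
  -- generic integrability
  have hint : ∀ ρ : Measure (ℝ × ℝ), IsCoupling ρ μ ν → ∀ f : ℝ × ℝ → ℝ, Continuous f →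
      (∀ p : ℝ × ℝ, |f p| ≤ |p.1| + b * |p.2| + 3 * |s|) → Integrable f ρ := by
    intro ρ hρ f hf hbd
    haveI := hρ.1
    refine Integrable.mono' (integrable_const (C + b * C' + 3 * |s|))
      hf.aestronglyMeasurable ?_
    filter_upwards [hbound ρ hρ] with p hp
    have h2 : b * |p.2| ≤ b * C' := mul_le_mul_of_nonneg_left hp.2 hb.le
    have := hbd p
    simp only [Real.norm_eq_abs]
    linarith [hp.1]
  have hcbd : ∀ p : ℝ × ℝ, |min p.1 (b * p.2)| ≤ |p.1| + b * |p.2| + 3 * |s| := by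
    intro p
    have := abs_min_le_add p.1 (b * p.2)
    rw [abs_mul, abs_of_pos hb] at this
    linarith [abs_nonneg s]
  have hgbd : ∀ p : ℝ × ℝ,
      |min p.1 s + min (b * p.2) s - s| ≤ |p.1| + b * |p.2| + 3 * |s| := by
    intro p
    have h1 := abs_min_le_add p.1 s
    have h2 := abs_min_le_add (b * p.2) s
    rw [abs_mul, abs_of_pos hb] at h2
    calc |min p.1 s + min (b * p.2) s - s|
        ≤ |min p.1 s| + |min (b * p.2) s| + |s| := by
          have := abs_sub (min p.1 s + min (b * p.2) s) s
          have := abs_add_le (min p.1 s) (min (b * p.2) s)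
          calc |min p.1 s + min (b * p.2) s - s|
              ≤ |min p.1 s + min (b * p.2) s| + |s| := abs_sub _ _
            _ ≤ |min p.1 s| + |min (b * p.2) s| + |s| := by linarith
      _ ≤ |p.1| + b * |p.2| + 3 * |s| := by linarith
  have hc_cont : Continuous fun p : ℝ × ℝ => min p.1 (b * p.2) :=
    continuous_fst.min (continuous_const.mul continuous_snd)
  have hg_cont : Continuous fun p : ℝ × ℝ => min p.1 s + min (b * p.2) s - s :=
    ((continuous_fst.min continuous_const).add
      ((continuous_const.mul continuous_snd).min continuous_const)).sub continuous_const
  -- transfer to marginals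
  have hmap1 : ∀ ρ : Measure (ℝ × ℝ), IsCoupling ρ μ ν → ∀ f : ℝ → ℝ, Continuous f →
      ∫ p : ℝ × ℝ, f p.1 ∂ρ = ∫ x, f x ∂μ := by
    intro ρ hρ f hf
    calc ∫ p : ℝ × ℝ, f p.1 ∂ρ = ∫ x, f x ∂(ρ.map Prod.fst) :=
          (integral_map measurable_fst.aemeasurable hf.aestronglyMeasurable).symm
      _ = ∫ x, f x ∂μ := by rw [hρ.2.1]
  have hmap2 : ∀ ρ : Measure (ℝ × ℝ), IsCoupling ρ μ ν → ∀ f : ℝ → ℝ, Continuous f →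
      ∫ p : ℝ × ℝ, f p.2 ∂ρ = ∫ y, f y ∂ν := by
    intro ρ hρ f hf
    calc ∫ p : ℝ × ℝ, f p.2 ∂ρ = ∫ y, f y ∂(ρ.map Prod.snd) :=
          (integral_map measurable_snd.aemeasurable hf.aestronglyMeasurable).symm
      _ = ∫ y, f y ∂ν := by rw [hρ.2.2]
  -- integral of g under any coupling
  have hgint : ∀ ρ : Measure (ℝ × ℝ), IsCoupling ρ μ ν →
      ∫ p : ℝ × ℝ, (min p.1 s + min (b * p.2) s - s) ∂ρ =
        (∫ x, min x s ∂μ) + (∫ y, min (b * y) s ∂ν) - s := by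
    intro ρ hρ
    haveI := hρ.1
    have i1 : Integrable (fun p : ℝ × ℝ => min p.1 s) ρ := by
      refine hint ρ hρ _ (continuous_fst.min continuous_const) fun p => ?_
      have := abs_min_le_add p.1 s
      have : (0:ℝ) ≤ b * |p.2| := by positivity
      linarith [abs_min_le_add p.1 s, abs_nonneg s]
    have i2 : Integrable (fun p : ℝ × ℝ => min (b * p.2) s) ρ := by
      refine hint ρ hρ _ ((continuous_const.mul continuous_snd).min continuous_const)
        fun p => ?_
      have h2 := abs_min_le_add (b * p.2) s
      rw [abs_mul, abs_of_pos hb] at h2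
      linarith [abs_nonneg p.1, abs_nonneg s]
    have i12 : Integrable (fun p : ℝ × ℝ => min p.1 s + min (b * p.2) s) ρ := i1.add i2
    rw [integral_sub i12 (integrable_const s), integral_add i1 i2,
      integral_const, Measure.real, measure_univ, ENNReal.toReal_one, one_smul]
    rw [hmap1 ρ hρ (fun x => min x s) (continuous_id.min continuous_const),
      hmap2 ρ hρ (fun y => min (b * y) s)
        ((continuous_const.mul continuous_id).min continuous_const)]
  -- one-dimensional integrability
  have hμae : ∀ᵐ x ∂μ, |x| ≤ C := by
    have e : ∀ᵐ x ∂μ, x ∈ K := by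
      rw [ae_iff]; exact hKμ
    filter_upwards [e] with x hx
    simpa [Real.norm_eq_abs] using hC _ hx
  have hνae : ∀ᵐ y ∂ν, |y| ≤ C' := by
    have e : ∀ᵐ y ∂ν, y ∈ K' := by
      rw [ae_iff]; exact hKν
    filter_upwards [e] with y hy
    simpa [Real.norm_eq_abs] using hC' _ hy
  have hμmin : Integrable (fun x => min x s) μ := by
    refine Integrable.mono' (integrable_const (C + |s|))
      (continuous_id.min continuous_const).aestronglyMeasurable ?_
    filter_upwards [hμae] with x hx
    simp only [Real.norm_eq_abs]
    linarith [abs_min_le_add x s]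
  have hνmin : Integrable (fun y => min (b * y) s) ν := by
    refine Integrable.mono' (integrable_const (b * C' + |s|))
      ((continuous_const.mul continuous_id).min continuous_const).aestronglyMeasurable ?_
    filter_upwards [hνae] with y hy
    simp only [Real.norm_eq_abs]
    have h2 := abs_min_le_add (b * y) s
    rw [abs_mul, abs_of_pos hb] at h2
    have : b * |y| ≤ b * C' := mul_le_mul_of_nonneg_left hy hb.le
    linarith
  -- decomposition of the marginal integrals
  have hμdec : ∫ x, min x s ∂μ =
      (∫ x in Set.Iic s, x ∂μ) + s * (μ (Set.Ioi s)).toReal := by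
    have h1 : ∫ x, min x s ∂μ =
        (∫ x in Set.Iic s, min x s ∂μ) + ∫ x in (Set.Iic s)ᶜ, min x s ∂μ :=
      (integral_add_compl measurableSet_Iic hμmin).symm
    rw [h1, Set.compl_Iic]
    congr 1
    · exact setIntegral_congr_fun measurableSet_Iic fun x hx => min_eq_left hx
    · rw [setIntegral_congr_fun measurableSet_Ioi fun x hx => min_eq_right (le_of_lt hx),
        setIntegral_const, smul_eq_mul, mul_comm, Measure.real]
  have hνdec : ∫ y, min (b * y) s ∂ν =
      b * (∫ y in Set.Iic (s / b), y ∂ν) + s * (ν (Set.Ioi (s / b))).toReal := by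
    have h1 : ∫ y, min (b * y) s ∂ν =
        (∫ y in Set.Iic (s / b), min (b * y) s ∂ν) +
          ∫ y in (Set.Iic (s / b))ᶜ, min (b * y) s ∂ν :=
      (integral_add_compl measurableSet_Iic hνmin).symm
    rw [h1, Set.compl_Iic]
    congr 1
    · rw [setIntegral_congr_fun measurableSet_Iic (g := fun y => b * y)
        (fun y hy => min_eq_left (by rw [mul_comm]; exact (le_div_iff₀ hb).mp hy)),
        integral_const_mul]
    · rw [setIntegral_congr_fun measurableSet_Ioi (g := fun _ => s)
        (fun y hy => min_eq_right (by rw [mul_comm]; exact (div_le_iff₀ hb).mp hy.le)),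
        setIntegral_const, smul_eq_mul, mul_comm, Measure.real]
  -- mass balance
  have hsum : (μ (Set.Ioi s)).toReal + (ν (Set.Ioi (s / b))).toReal = 1 := by
    have h1 : μ (Set.Iic s) = μ (Set.Iio s) := (measure_congr Iio_ae_eq_Iic).symm
    have h2 : μ (Set.Ioi s) + ν (Set.Ioi (s / b)) = 1 := by
      rw [← hs, ← h1]
      have : Set.Ioi s = (Set.Iic s)ᶜ := (Set.compl_Iic).symm
      rw [this, prob_compl_eq_one_sub measurableSet_Iic]
      rw [tsub_add_cancel_of_le prob_le_one]
    have h3 := congrArg ENNReal.toReal h2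
    rw [ENNReal.toReal_add (measure_ne_top _ _) (measure_ne_top _ _)] at h3
    simpa using h3
  -- value of ∫ g for any coupling
  set V : ℝ := (∫ x in Set.Iic s, x ∂μ) + b * ∫ y in Set.Iic (s / b), y ∂ν with hV
  have hgval : ∀ ρ : Measure (ℝ × ℝ), IsCoupling ρ μ ν →
      ∫ p : ℝ × ℝ, (min p.1 s + min (b * p.2) s - s) ∂ρ = V := by
    intro ρ hρ
    rw [hgint ρ hρ, hμdec, hνdec, hV]
    have h' : s * (μ (Set.Ioi s)).toReal + s * (ν (Set.Ioi (s / b))).toReal = s := by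
      rw [← mul_add, hsum, mul_one]
    linarith
  -- pointwise inequality g ≤ c
  have hgle : ∀ p : ℝ × ℝ, min p.1 s + min (b * p.2) s - s ≤ min p.1 (b * p.2) := by
    intro p
    rcases le_total p.1 (b * p.2) with h | h
    · rw [min_eq_left h]
      have h1 := min_le_left p.1 s
      have h2 := min_le_right (b * p.2) s
      linarith
    · rw [min_eq_right h]
      have h1 := min_le_right p.1 s
      have h2 := min_le_left (b * p.2) s
      linarith
  -- π is concentrated on Q
  set Q : Set (ℝ × ℝ) :=
    {p : ℝ × ℝ | p.1 ≤ s ∧ s / b ≤ p.2} ∪ {p : ℝ × ℝ | s ≤ p.1 ∧ p.2 ≤ s / b} with hQ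
  have hQnull : π Qᶜ = 0 := by
    refine measure_null_of_locally_null _ fun p hp => ?_
    have hp' : p ∉ msupport π := fun h => hp (hsupp h)
    rw [msupport, Set.mem_setOf_eq] at hp'
    push_neg at hp'
    obtain ⟨U, hU, hpU, hU0⟩ := hp'
    exact ⟨U, mem_nhdsWithin_of_mem_nhds (hU.mem_nhds hpU),
      le_antisymm hU0 zero_le⟩
  have hπQ : ∀ᵐ p ∂π, p ∈ Q := by
    rw [ae_iff]
    exact hQnull
  have hcg : (fun p : ℝ × ℝ => min p.1 (b * p.2)) =ᵐ[π]
      fun p : ℝ × ℝ => min p.1 s + min (b * p.2) s - s := by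
    filter_upwards [hπQ] with p hp
    rcases hp with ⟨h1, h2⟩ | ⟨h1, h2⟩
    · have hby : s ≤ b * p.2 := by
        rw [mul_comm]; exact (div_le_iff₀ hb).mp h2
      rw [min_eq_left (h1.trans hby), min_eq_left h1, min_eq_right hby]
      ring
    · have hby : b * p.2 ≤ s := by
        rw [mul_comm]; exact (le_div_iff₀ hb).mp h2
      rw [min_eq_right (hby.trans h1), min_eq_right h1, min_eq_left hby]
      ring
  have hπval : ∫ p : ℝ × ℝ, min p.1 (b * p.2) ∂π = V := by
    rw [integral_congr_ae hcg, hgval π hπ]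
  refine ⟨?_, hπval⟩
  intro ρ hρ
  rw [hπval]
  have icρ : Integrable (fun p : ℝ × ℝ => min p.1 (b * p.2)) ρ :=
    hint ρ hρ _ hc_cont hcbd
  have igρ : Integrable (fun p : ℝ × ℝ => min p.1 s + min (b * p.2) s - s) ρ :=
    hint ρ hρ _ hg_cont hgbd
  calc V = ∫ p : ℝ × ℝ, (min p.1 s + min (b * p.2) s - s) ∂ρ := (hgval ρ hρ).symm
    _ ≤ ∫ p : ℝ × ℝ, min p.1 (b * p.2) ∂ρ := integral_mono igρ icρ hgle
end
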